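/- Let n ≥ 1 and let P, Q, I', J be (n+1)×(n+1) matrices over a field of characteristic ≠ 2, where I' is the diagonal matrix with I'₀₀ = 0 and I'ᵢᵢ = 1 for 1 ≤ i ≤ n, J has a single nonzero entry J₀₀ = 1, the 0-th column of P is zero, and the 0-th row of Q is zero. Then for no nonzero scalar λ can the equation 2PQ + PI' + QI' + I' = λJ hold. -/

import Mathlib

theorem stmt_12 {K : Type*} [Field K] (hchar : (2 : K) ≠ 0) (n : ℕ) (hn : 1 ≤ n)
    (P Q : Matrix (Fin (n + 1)) (Fin (n + 1)) K)
    (hP : ∀ i, P i 0 = 0) (hQ : ∀ j, Q 0 j = 0)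
    (lam : K) (hlam : lam ≠ 0) :
    let I' : Matrix (Fin (n + 1)) (Fin (n + 1)) K :=
      Matrix.diagonal (fun i => if i = 0 then 0 else 1)
    let J : Matrix (Fin (n + 1)) (Fin (n + 1)) K := Matrix.single 0 0 1
    2 • (P * Q) + P * I' + Q * I' + I' ≠ lam • J := by
  intro I' J heq
  set d : Fin (n + 1) → K := fun i => if i = 0 then 0 else 1 with hd
  have hI'eq : I' = Matrix.diagonal d := rfl
  have hQI'app : ∀ i j, (Q * I') i j = Q i j * d j := fun i j => Matrix.mul_diagonal ..
  have hI'app : ∀ i j, I' i j = if i = j then d i else 0 := fun i j => Matrix.diagonal_apply ..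
  have hJapp : ∀ i j, J i j = if i = 0 ∧ j = 0 then 1 else 0 := by
    intro i j
    show Matrix.single 0 0 1 i j = _
    rw [Matrix.single]
    simp only [Matrix.of_apply]
    congr 1
    simp [eq_comm, and_comm]
  have hI'Q : I' * Q = Q := by
    ext i j
    rw [hI'eq, Matrix.diagonal_mul]
    by_cases h : i = 0
    · simp [h, hQ, d]
    · simp [h, d]
  have hI'I' : I' * I' = I' := by
    ext i j
    rw [hI'eq, Matrix.diagonal_mul_diagonal]
    by_cases h2 : i = j
    · subst h2
      by_cases h : i = 0 <;> simp [Matrix.diagonal_apply_eq, h, d]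
    · simp [Matrix.diagonal_apply_ne _ h2]
  set A := 2 • P + I' with hA
  set B := 2 • Q + I' with hB
  have expand : A * B = 4 • (P * Q) + 2 • (P * I') + 2 • Q + I' := by
    rw [hA, hB]
    simp only [Matrix.add_mul, Matrix.mul_add, Matrix.smul_mul, Matrix.mul_smul,
      hI'Q, hI'I', smul_smul]
    abel
  have hAB : A * B = 2 • (lam • J) + (2 • Q - 2 • (Q * I') - I') := by
    rw [← heq, expand]
    abel
  have hdetA : A.det = 0 := by
    apply Matrix.det_eq_zero_of_column_eq_zero 0
    intro i
    rw [hA, Matrix.add_apply, Matrix.smul_apply, hP, smul_zero, zero_add, hI'app]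
    by_cases h : i = 0 <;> simp [h, d]
  set D := 2 • (lam • J) + (2 • Q - 2 • (Q * I') - I') with hD
  have hlow : ∀ i j : Fin (n + 1), i < j → D i j = 0 := by
    intro i j hij
    have hj : j ≠ 0 := by
      intro h
      rw [h] at hij
      exact absurd hij (Fin.not_lt_zero i)
    have hij' : i ≠ j := ne_of_lt hij
    rw [hD]
    simp only [Matrix.add_apply, Matrix.sub_apply, Matrix.smul_apply,
      hQI'app, hI'app, hJapp, smul_eq_mul]
    simp [hj, hij', d]
  have hdiag : ∀ i : Fin (n + 1), D i i = if i = 0 then 2 * lam else -1 := by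
    intro i
    rw [hD]
    simp only [Matrix.add_apply, Matrix.sub_apply, Matrix.smul_apply,
      hQI'app, hI'app, hJapp, smul_eq_mul]
    by_cases h : i = 0
    · subst h
      simp [d, hQ]
    · simp [d, h]
  have hdetD : D.det ≠ 0 := by
    rw [Matrix.det_of_lowerTriangular D hlow]
    refine Finset.prod_ne_zero_iff.mpr fun i _ => ?_
    rw [hdiag i]
    by_cases h : i = 0
    · simp only [h, if_true]
      exact mul_ne_zero hchar hlam
    · simp [h]
  apply hdetD
  rw [← hAB, Matrix.det_mul, hdetA, zero_mul]
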